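/- Let (F, F₂, F₀, γ) be a monoidal functor with anomaly from a strict monoidal category C to a k-linear strict monoidal category D with k-bilinear tensor product, with chosen splittings p_X, q_X of the idempotents Π_X, and set F̃₂(X,Y) := p_{X⊗Y}∘F₂(X,Y)∘(q_X⊗q_Y) and F̃₀ := p_𝟙∘F₀. Then the unit coherences hold for the unitalized data: for every object X of C, F̃₂(X,𝟙)∘(id_{F̃(X)}⊗F̃₀) = id_{F̃(X)} and F̃₂(𝟙,X)∘(F̃₀⊗id_{F̃(X)}) = id_{F̃(X)}. -/

import Mathlib

open CategoryTheory MonoidalCategory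

/-- With `F̃(f) = p ∘ F(f) ∘ q`,
`F̃₂(X,Y) = p_{X⊗Y} ∘ F₂(X,Y) ∘ (q_X ⊗ q_Y)` and `F̃₀ = p_𝟙 ∘ F₀`, the unit
coherences hold for the unitalized data:
`F̃₂(X,𝟙) ∘ (id ⊗ F̃₀) = id_{F̃(X)}` and `F̃₂(𝟙,X) ∘ (F̃₀ ⊗ id) = id_{F̃(X)}`
(stated with the unitors inserted, as for `F`). -/
theorem stmt_12 {k : Type*} [Field k]
    {C : Type*} [Category C] [MonoidalCategory C]
    {D : Type*} [Category D] [Preadditive D] [Linear k D] [MonoidalCategory D]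
    [MonoidalPreadditive D] [MonoidalLinear k D]
    (γ : ∀ {X Y Z : C}, (X ⟶ Y) → (Y ⟶ Z) → kˣ)
    (hcocycle : ∀ {X Y Z W : C} (f : X ⟶ Y) (g : Y ⟶ Z) (h : Z ⟶ W),
      γ f (g ≫ h) * γ g h = γ (f ≫ g) h * γ f g)
    (hγmon : ∀ {X Y Z X' Y' Z' : C} (f : X ⟶ Y) (g : Y ⟶ Z)
      (f' : X' ⟶ Y') (g' : Y' ⟶ Z'),
      γ (f ⊗ₘ f') (g ⊗ₘ g') = γ f g * γ f' g')
    (Fobj : C → D) (Fmap : ∀ {X Y : C}, (X ⟶ Y) → (Fobj X ⟶ Fobj Y))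
    (hF : ∀ {X Y Z : C} (f : X ⟶ Y) (g : Y ⟶ Z),
      Fmap (f ≫ g) = (γ f g : k) • (Fmap f ≫ Fmap g))
    (F₂ : ∀ X Y : C, Fobj X ⊗ Fobj Y ⟶ Fobj (X ⊗ Y))
    (F₀ : 𝟙_ D ⟶ Fobj (𝟙_ C))
    (hF₂nat : ∀ {X X' Y Y' : C} (f : X ⟶ X') (g : Y ⟶ Y'),
      F₂ X Y ≫ Fmap (f ⊗ₘ g) = (Fmap f ⊗ₘ Fmap g) ≫ F₂ X' Y')
    (hassoc : ∀ X Y Z : C,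
      (F₂ X Y ⊗ₘ 𝟙 (Fobj Z)) ≫ F₂ (X ⊗ Y) Z ≫ Fmap (α_ X Y Z).hom =
        (α_ (Fobj X) (Fobj Y) (Fobj Z)).hom ≫ (𝟙 (Fobj X) ⊗ₘ F₂ Y Z) ≫ F₂ X (Y ⊗ Z))
    (hrunit : ∀ X : C,
      (𝟙 (Fobj X) ⊗ₘ F₀) ≫ F₂ X (𝟙_ C) ≫ Fmap (ρ_ X).hom = (ρ_ (Fobj X)).hom)
    (hlunit : ∀ X : C,
      (F₀ ⊗ₘ 𝟙 (Fobj X)) ≫ F₂ (𝟙_ C) X ≫ Fmap (λ_ X).hom = (λ_ (Fobj X)).hom)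
    (Ftobj : C → D)
    (p : ∀ X : C, Fobj X ⟶ Ftobj X) (q : ∀ X : C, Ftobj X ⟶ Fobj X)
    (hpq : ∀ X : C, q X ≫ p X = 𝟙 (Ftobj X))
    (hqp : ∀ X : C, p X ≫ q X = (γ (𝟙 X) (𝟙 X) : k) • Fmap (𝟙 X))
    :
    ∀ X : C,
      (𝟙 (Ftobj X) ⊗ₘ (F₀ ≫ p (𝟙_ C))) ≫
          ((q X ⊗ₘ q (𝟙_ C)) ≫ F₂ X (𝟙_ C) ≫ p (X ⊗ 𝟙_ C)) ≫
          (q (X ⊗ 𝟙_ C) ≫ Fmap (ρ_ X).hom ≫ p X) = (ρ_ (Ftobj X)).hom ∧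
      ((F₀ ≫ p (𝟙_ C)) ⊗ₘ 𝟙 (Ftobj X)) ≫
          ((q (𝟙_ C) ⊗ₘ q X) ≫ F₂ (𝟙_ C) X ≫ p (𝟙_ C ⊗ X)) ≫
          (q (𝟙_ C ⊗ X) ≫ Fmap (λ_ X).hom ≫ p X) = (λ_ (Ftobj X)).hom := by
  -- `γ (𝟙 A) f = γ (𝟙 A) (𝟙 A)` and `γ f (𝟙 B) = γ (𝟙 B) (𝟙 B)`
  have hγ1 : ∀ {A B : C} (f : A ⟶ B), γ (𝟙 A) f = γ (𝟙 A) (𝟙 A) := by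
    intro A B f
    have h := hcocycle (𝟙 A) (𝟙 A) f
    simp only [Category.id_comp] at h
    exact mul_left_cancel h
  -- the idempotent `p ≫ q` absorbs into `Fmap` on the left
  have heF : ∀ {A B : C} (f : A ⟶ B), (p A ≫ q A) ≫ Fmap f = Fmap f := by
    intro A B f
    have h := hF (𝟙 A) f
    rw [Category.id_comp, hγ1 f] at h
    rw [hqp, Linear.smul_comp]
    exact h.symm
  have heFc : ∀ {A B : C} (f : A ⟶ B) {Z : D} (g : Fobj B ⟶ Z),
      p A ≫ q A ≫ Fmap f ≫ g = Fmap f ≫ g := by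
    intro A B f Z g
    rw [← Category.assoc, ← Category.assoc, heF]
  have hq' : ∀ A : C, q A = q A ≫ (p A ≫ q A) := by
    intro A
    rw [← Category.assoc, hpq, Category.id_comp]
  -- smul and tensor
  have hsmul_tensor : ∀ {A B A' B' : D} (r s : k) (f : A ⟶ B) (g : A' ⟶ B'),
      (r • f) ⊗ₘ (s • g) = (r * s) • (f ⊗ₘ g) := by
    intros A B A' B' r s f g
    simp only [MonoidalCategory.tensorHom_def, MonoidalLinear.whiskerLeft_smul,
      MonoidalLinear.smul_whiskerRight, Linear.smul_comp, Linear.comp_smul,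
      smul_smul]
    rw [mul_comm]
  -- the idempotents pass through `F₂`
  have heF₂ : ∀ A B : C,
      ((p A ≫ q A) ⊗ₘ (p B ≫ q B)) ≫ F₂ A B
        = F₂ A B ≫ (p (A ⊗ B) ≫ q (A ⊗ B)) := by
    intro A B
    have hsc : (γ (𝟙 A) (𝟙 A) : k) * (γ (𝟙 B) (𝟙 B) : k)
        = (γ (𝟙 (A ⊗ B)) (𝟙 (A ⊗ B)) : k) := by
      have h := hγmon (𝟙 A) (𝟙 A) (𝟙 B) (𝟙 B)
      rw [id_tensorHom_id] at h
      rw [h, Units.val_mul]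
    rw [hqp, hqp, hqp, hsmul_tensor, hsc, Linear.smul_comp, ← hF₂nat,
      id_tensorHom_id, Linear.comp_smul]
  intro X
  constructor
  · simp only [Category.assoc]
    rw [tensorHom_comp_tensorHom_assoc, Category.id_comp,
      Category.assoc F₀ (p (𝟙_ C)) (q (𝟙_ C)), hq' X, ← tensorHom_comp_tensorHom,
      Category.assoc, reassoc_of% heF₂ X (𝟙_ C), reassoc_of% hpq (X ⊗ 𝟙_ C),
      heFc, ← tensor_id_comp_id_tensor F₀ (q X), Category.assoc,
      reassoc_of% hrunit X, tensorHom_id, rightUnitor_naturality_assoc,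
      hpq, Category.comp_id]
  · simp only [Category.assoc]
    rw [tensorHom_comp_tensorHom_assoc, Category.id_comp,
      Category.assoc F₀ (p (𝟙_ C)) (q (𝟙_ C)), hq' X, ← tensorHom_comp_tensorHom,
      Category.assoc, reassoc_of% heF₂ (𝟙_ C) X, reassoc_of% hpq (𝟙_ C ⊗ X),
      heFc, ← id_tensor_comp_tensor_id (q X) F₀, Category.assoc,
      reassoc_of% hlunit X, id_tensorHom, leftUnitor_naturality_assoc,
      hpq, Category.comp_id]
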